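/- Let 0 < α₂ < 1/2 and α₁ = 1 − 2α₂, and let ν be the probability measure on ((√2−1)², (√2+1)²) with density √((x − (√2−1)²)((√2+1)² − x))/(2πx) · (α₁ + α₂·x). Then the moments m_k = ∫ x^k dν(x) satisfy: m₁ = 2(1+α₂), m₂ = 2(3+5α₂), m₃ = 2(11+23α₂), and m₄ = 2(45+107α₂). -/

import Mathlib

open MeasureTheory Set
open scoped NNReal ENNReal

lemma semicircle_int_u (d₀ d₁ d₂ d₃ d₄ : ℝ) :
    ∫ x in (3 - 2*Real.sqrt 2)..(3 + 2*Real.sqrt 2),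
      (d₀ + d₁*(x-3) + d₂*(x-3)^2 + d₃*(x-3)^3 + d₄*(x-3)^4) * Real.sqrt (8 - (x-3)^2)
    = Real.pi * (4*d₀ + 8*d₂ + 32*d₄) := by
  have h2 : Real.sqrt 2 ^ 2 = 2 := Real.sq_sqrt (by norm_num)
  have hr : (2*Real.sqrt 2)^2 = 8 := by rw [mul_pow, h2]; norm_num
  have hrpos : (0:ℝ) < 2*Real.sqrt 2 := by positivity
  have hab : 3 - 2*Real.sqrt 2 ≤ 3 + 2*Real.sqrt 2 := by linarith
  set e₀ : ℝ := -(8/3)*d₁ - (128/15)*d₃ with he0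
  set e₁ : ℝ := d₀/2 - d₂ - 4*d₄ with he1
  set e₂ : ℝ := d₁/3 - (8/15)*d₃ with he2
  set e₃ : ℝ := d₂/4 - d₄/3 with he3
  set e₄ : ℝ := d₃/5 with he4
  set e₅ : ℝ := d₄/6 with he5
  set CA : ℝ := 4*d₀ + 8*d₂ + 32*d₄ with hCA
  set F : ℝ → ℝ := fun x => Real.sqrt (8 - (x-3)^2) *
      (e₀ + e₁*(x-3)^1 + e₂*(x-3)^2 + e₃*(x-3)^3 + e₄*(x-3)^4 + e₅*(x-3)^5)
      + CA * Real.arcsin ((x-3)/(2*Real.sqrt 2)) with hF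
  have hderiv : ∀ x ∈ Ioo (3 - 2*Real.sqrt 2) (3 + 2*Real.sqrt 2),
      HasDerivAt F ((d₀ + d₁*(x-3) + d₂*(x-3)^2 + d₃*(x-3)^3 + d₄*(x-3)^4)
        * Real.sqrt (8 - (x-3)^2)) x := by
    intro x hx
    have hx8 : 0 < 8 - (x-3)^2 := by
      have : (x-3)^2 < (2*Real.sqrt 2)^2 :=
        sq_lt_sq' (by linarith [hx.1]) (by linarith [hx.2])
      rw [hr] at this; linarith
    have hs : 0 < Real.sqrt (8 - (x-3)^2) := Real.sqrt_pos.mpr hx8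
    have ht : Real.sqrt (8 - (x-3)^2) ≠ 0 := hs.ne'
    have hs2 : Real.sqrt (8 - (x-3)^2) ^ 2 = 8 - (x-3)^2 := Real.sq_sqrt hx8.le
    have hu : HasDerivAt (fun y : ℝ => y - 3) 1 x := (hasDerivAt_id x).sub_const 3
    have hinner : HasDerivAt (fun y : ℝ => 8 - (y-3)^2) (-(2*(x-3))) x := by
      simpa using (hu.pow 2).const_sub 8
    have hsq : HasDerivAt (fun y : ℝ => Real.sqrt (8 - (y-3)^2))
        (-(x-3) / Real.sqrt (8 - (x-3)^2)) x := by
      have := hinner.sqrt (ne_of_gt hx8)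
      convert this using 1
      rw [show -(2*(x-3)) = 2*(-(x-3)) by ring, mul_div_mul_left _ _ (two_ne_zero)]
    have hpoly : HasDerivAt (fun y : ℝ =>
        e₀ + e₁*(y-3)^1 + e₂*(y-3)^2 + e₃*(y-3)^3 + e₄*(y-3)^4 + e₅*(y-3)^5)
        (e₁ + 2*e₂*(x-3) + 3*e₃*(x-3)^2 + 4*e₄*(x-3)^3 + 5*e₅*(x-3)^4) x := by
      have h1 := (hu.pow 1).const_mul e₁
      have h2' := (hu.pow 2).const_mul e₂
      have h3 := (hu.pow 3).const_mul e₃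
      have h4 := (hu.pow 4).const_mul e₄
      have h5 := (hu.pow 5).const_mul e₅
      have := ((((((hasDerivAt_const x e₀).add h1).add h2').add h3).add h4).add h5)
      refine this.congr_deriv (Eq.symm ?_)
      push_cast
      ring
    have harg : HasDerivAt (fun y : ℝ => (y-3)/(2*Real.sqrt 2)) (1/(2*Real.sqrt 2)) x := by
      simpa using hu.div_const (2*Real.sqrt 2)
    have hval : |(x-3)/(2*Real.sqrt 2)| < 1 := by
      rw [abs_div, abs_of_pos hrpos, div_lt_one hrpos, abs_lt]
      exact ⟨by linarith [hx.1], by linarith [hx.2]⟩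
    have hsqrt1 : Real.sqrt (1 - ((x-3)/(2*Real.sqrt 2))^2)
        = Real.sqrt (8 - (x-3)^2) / (2*Real.sqrt 2) := by
      rw [show 1 - ((x-3)/(2*Real.sqrt 2))^2 = (8 - (x-3)^2) / (2*Real.sqrt 2)^2 by
        rw [div_pow, hr]; ring]
      rw [Real.sqrt_div hx8.le ((2*Real.sqrt 2)^2), Real.sqrt_sq hrpos.le]
    have harcsin : HasDerivAt (fun y : ℝ => Real.arcsin ((y-3)/(2*Real.sqrt 2)))
        (1 / Real.sqrt (8 - (x-3)^2)) x := by
      have h1 : (x-3)/(2*Real.sqrt 2) ≠ -1 := by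
        intro h; rw [h] at hval; simp at hval
      have h1' : (x-3)/(2*Real.sqrt 2) ≠ 1 := by
        intro h; rw [h] at hval; simp at hval
      have := (Real.hasDerivAt_arcsin h1 h1').comp x harg
      refine this.congr_deriv (Eq.symm ?_)
      rw [hsqrt1]
      field_simp
    have hD := (hsq.mul hpoly).add (harcsin.const_mul CA)
    set T := Real.sqrt (8 - (x-3)^2) with hTdef
    set Qv := e₀ + e₁*(x-3)^1 + e₂*(x-3)^2 + e₃*(x-3)^3 + e₄*(x-3)^4 + e₅*(x-3)^5 with hQv
    set Qd := e₁ + 2*e₂*(x-3) + 3*e₃*(x-3)^2 + 4*e₄*(x-3)^3 + 5*e₅*(x-3)^4 with hQd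
    refine hD.congr_deriv (Eq.symm ?_)
    have hR : -(x-3)/T*Qv + T*Qd + CA*(1/T) = (-(x-3)*Qv + T^2*Qd + CA)/T := by
      field_simp
    rw [hR, eq_div_iff ht, mul_assoc, ← sq, hs2]
    simp only [hQv, hQd, he0, he1, he2, he3, he4, he5, hCA]
    ring
  have hpc : ∀ (a b c d e f : ℝ), Continuous fun x : ℝ =>
      a + b*(x-3)^1 + c*(x-3)^2 + d*(x-3)^3 + e*(x-3)^4 + f*(x-3)^5 := by
    intro a b c d e f; fun_prop
  have hcont : ContinuousOn F (Icc (3 - 2*Real.sqrt 2) (3 + 2*Real.sqrt 2)) := by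
    apply Continuous.continuousOn
    apply Continuous.add
    · exact (Real.continuous_sqrt.comp (by fun_prop)).mul (hpc _ _ _ _ _ _)
    · exact continuous_const.mul (Real.continuous_arcsin.comp (by fun_prop))
  have hint : IntervalIntegrable (fun x => (d₀ + d₁*(x-3) + d₂*(x-3)^2 + d₃*(x-3)^3
      + d₄*(x-3)^4) * Real.sqrt (8 - (x-3)^2)) volume
      (3 - 2*Real.sqrt 2) (3 + 2*Real.sqrt 2) := by
    apply Continuous.intervalIntegrable
    exact (by fun_prop : Continuous fun x : ℝ => d₀ + d₁*(x-3) + d₂*(x-3)^2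
      + d₃*(x-3)^3 + d₄*(x-3)^4).mul (Real.continuous_sqrt.comp (by fun_prop))
  have key := intervalIntegral.integral_eq_sub_of_hasDeriv_right_of_le hab hcont
    (fun x hx => (hderiv x hx).hasDerivWithinAt) hint
  rw [key]
  have hb3 : (3+2*Real.sqrt 2) - 3 = 2*Real.sqrt 2 := by ring
  have ha3 : (3-2*Real.sqrt 2) - 3 = -(2*Real.sqrt 2) := by ring
  have s1 : Real.sqrt (8 - ((3+2*Real.sqrt 2) - 3)^2) = 0 := by
    rw [hb3, hr]; simp
  have s2 : Real.sqrt (8 - ((3-2*Real.sqrt 2) - 3)^2) = 0 := by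
    rw [ha3, neg_pow, hr]; simp
  have a1 : Real.arcsin (((3+2*Real.sqrt 2) - 3)/(2*Real.sqrt 2)) = Real.pi/2 := by
    rw [hb3, div_self hrpos.ne', Real.arcsin_one]
  have a2 : Real.arcsin (((3-2*Real.sqrt 2) - 3)/(2*Real.sqrt 2)) = -(Real.pi/2) := by
    rw [ha3, neg_div, div_self hrpos.ne', Real.arcsin_neg, Real.arcsin_one]
  simp only [hF]
  rw [s1, s2, a1, a2]
  simp only [hCA]
  ring


/-- The probability measure on `((√2-1)², (√2+1)²)` with density
`√((x - (√2-1)²)((√2+1)² - x))/(2πx) · (α₁ + α₂·x)`, where `α₁ = 1 - 2α₂`.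
It is the law of `X⁻¹` for `X ~ σ_{α₁,α₂}`. -/
noncomputable def nuMeasure (α₂ : ℝ) : Measure ℝ :=
  MeasureTheory.volume.withDensity
    (fun x => ENNReal.ofReal
      ((Set.Ioo ((Real.sqrt 2 - 1) ^ 2) ((Real.sqrt 2 + 1) ^ 2)).indicator
        (fun x =>
          Real.sqrt ((x - (Real.sqrt 2 - 1) ^ 2) * ((Real.sqrt 2 + 1) ^ 2 - x)) /
              (2 * Real.pi * x) * ((1 - 2 * α₂) + α₂ * x)) x))

noncomputable def rhoFn (α₂ : ℝ) : ℝ → ℝ :=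
  (Set.Ioo ((Real.sqrt 2 - 1) ^ 2) ((Real.sqrt 2 + 1) ^ 2)).indicator
    (fun x =>
      Real.sqrt ((x - (Real.sqrt 2 - 1) ^ 2) * ((Real.sqrt 2 + 1) ^ 2 - x)) /
          (2 * Real.pi * x) * ((1 - 2 * α₂) + α₂ * x))

lemma nuMeasure_eq (α₂ : ℝ) : nuMeasure α₂
    = MeasureTheory.volume.withDensity (fun x => ((Real.toNNReal (rhoFn α₂ x) : ℝ≥0) : ℝ≥0∞)) :=
  rfl

lemma moment_aux (α₂ : ℝ) (h0 : 0 < α₂) (h12 : α₂ < 1/2) (k : ℕ) :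
    (∫ x : ℝ, x^(k+1) ∂(nuMeasure α₂)) = (2*Real.pi)⁻¹ *
      ∫ x in (3 - 2*Real.sqrt 2)..(3 + 2*Real.sqrt 2),
        (((1 - 2*α₂) + α₂*x) * x^k) * Real.sqrt (8 - (x-3)^2) := by
  have h2 : Real.sqrt 2 ^ 2 = 2 := Real.sq_sqrt (by norm_num)
  have hA : (Real.sqrt 2 - 1)^2 = 3 - 2*Real.sqrt 2 := by linear_combination h2
  have hB : (Real.sqrt 2 + 1)^2 = 3 + 2*Real.sqrt 2 := by linear_combination h2
  have hApos : (0:ℝ) < 3 - 2*Real.sqrt 2 := by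
    nlinarith [h2, Real.sqrt_nonneg 2]
  have hab : 3 - 2*Real.sqrt 2 ≤ 3 + 2*Real.sqrt 2 := by
    have := Real.sqrt_nonneg 2; linarith
  have hpos : ∀ x, 0 ≤ rhoFn α₂ x := by
    intro x
    apply Set.indicator_nonneg
    intro y hy
    have hy0 : 0 < y := lt_of_le_of_lt (sq_nonneg _) hy.1
    apply mul_nonneg
    · apply div_nonneg (Real.sqrt_nonneg _)
      positivity
    · nlinarith [mul_pos h0 hy0]
  have hmeas : Measurable fun x => Real.toNNReal (rhoFn α₂ x) := by
    apply Measurable.real_toNNReal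
    unfold rhoFn
    apply Measurable.indicator _ measurableSet_Ioo
    fun_prop
  rw [nuMeasure_eq, integral_withDensity_eq_integral_smul hmeas]
  have step1 : (∫ x : ℝ, Real.toNNReal (rhoFn α₂ x) • x^(k+1))
      = ∫ x : ℝ, rhoFn α₂ x * x^(k+1) := by
    refine integral_congr_ae (Filter.Eventually.of_forall fun x => ?_)
    simp only [NNReal.smul_def, Real.coe_toNNReal _ (hpos x), smul_eq_mul]
  rw [step1]
  have step2 : (∫ x : ℝ, rhoFn α₂ x * x^(k+1))
      = ∫ x in Ioo ((Real.sqrt 2 - 1)^2) ((Real.sqrt 2 + 1)^2),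
          Real.sqrt ((x - (Real.sqrt 2 - 1) ^ 2) * ((Real.sqrt 2 + 1) ^ 2 - x)) /
            (2 * Real.pi * x) * ((1 - 2 * α₂) + α₂ * x) * x^(k+1) := by
    rw [← integral_indicator measurableSet_Ioo]
    refine integral_congr_ae (Filter.Eventually.of_forall fun x => ?_)
    simp only [rhoFn]
    exact (Set.indicator_mul_left _ _ _).symm
  rw [step2, hA, hB, ← MeasureTheory.integral_Ioc_eq_integral_Ioo,
    ← intervalIntegral.integral_of_le hab, ← intervalIntegral.integral_const_mul]
  apply intervalIntegral.integral_congr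
  intro x hx
  rw [Set.uIcc_of_le hab] at hx
  have hx0 : 0 < x := lt_of_lt_of_le hApos hx.1
  simp only
  rw [show (x - (3 - 2*Real.sqrt 2)) * ((3 + 2*Real.sqrt 2) - x) = 8 - (x-3)^2 by
    linear_combination 4*h2]
  rw [pow_succ]
  have hπ : Real.pi ≠ 0 := Real.pi_ne_zero
  field_simp
  ring


/-- For `0 < α₂ < 1/2` and `α₁ = 1 - 2α₂`, the moments of `ν` satisfy
`m₁ = 2(1+α₂)`, `m₂ = 2(3+5α₂)`, `m₃ = 2(11+23α₂)`, `m₄ = 2(45+107α₂)`. -/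
theorem nu_moments (α₂ : ℝ) (h0 : 0 < α₂) (h12 : α₂ < 1 / 2) :
    (∫ x : ℝ, x ∂(nuMeasure α₂)) = 2 * (1 + α₂) ∧
    (∫ x : ℝ, x ^ 2 ∂(nuMeasure α₂)) = 2 * (3 + 5 * α₂) ∧
    (∫ x : ℝ, x ^ 3 ∂(nuMeasure α₂)) = 2 * (11 + 23 * α₂) ∧
    (∫ x : ℝ, x ^ 4 ∂(nuMeasure α₂)) = 2 * (45 + 107 * α₂) := by
  have hπ : Real.pi ≠ 0 := Real.pi_ne_zero
  refine ⟨?_, ?_, ?_, ?_⟩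
  · have h := moment_aux α₂ h0 h12 0
    simp only [zero_add, pow_one] at h
    rw [h, show (∫ x in (3 - 2*Real.sqrt 2)..(3 + 2*Real.sqrt 2),
        ((1 - 2*α₂ + α₂*x) * x^0) * Real.sqrt (8 - (x-3)^2))
      = ∫ x in (3 - 2*Real.sqrt 2)..(3 + 2*Real.sqrt 2),
        (((1-2*α₂)+3*α₂) + α₂*(x-3) + 0*(x-3)^2 + 0*(x-3)^3 + 0*(x-3)^4)
          * Real.sqrt (8 - (x-3)^2)
      from intervalIntegral.integral_congr fun x _ => by ring,
      semicircle_int_u]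
    field_simp
    ring
  · have h := moment_aux α₂ h0 h12 1
    simp only [Nat.reduceAdd] at h
    rw [h, show (∫ x in (3 - 2*Real.sqrt 2)..(3 + 2*Real.sqrt 2),
        ((1 - 2*α₂ + α₂*x) * x^1) * Real.sqrt (8 - (x-3)^2))
      = ∫ x in (3 - 2*Real.sqrt 2)..(3 + 2*Real.sqrt 2),
        ((3*(1-2*α₂)+9*α₂) + ((1-2*α₂)+6*α₂)*(x-3) + α₂*(x-3)^2 + 0*(x-3)^3 + 0*(x-3)^4)
          * Real.sqrt (8 - (x-3)^2)
      from intervalIntegral.integral_congr fun x _ => by ring,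
      semicircle_int_u]
    field_simp
    ring
  · have h := moment_aux α₂ h0 h12 2
    simp only [Nat.reduceAdd] at h
    rw [h, show (∫ x in (3 - 2*Real.sqrt 2)..(3 + 2*Real.sqrt 2),
        ((1 - 2*α₂ + α₂*x) * x^2) * Real.sqrt (8 - (x-3)^2))
      = ∫ x in (3 - 2*Real.sqrt 2)..(3 + 2*Real.sqrt 2),
        ((9*(1-2*α₂)+27*α₂) + (6*(1-2*α₂)+27*α₂)*(x-3) + ((1-2*α₂)+9*α₂)*(x-3)^2
          + α₂*(x-3)^3 + 0*(x-3)^4) * Real.sqrt (8 - (x-3)^2)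
      from intervalIntegral.integral_congr fun x _ => by ring,
      semicircle_int_u]
    field_simp
    ring
  · have h := moment_aux α₂ h0 h12 3
    simp only [Nat.reduceAdd] at h
    rw [h, show (∫ x in (3 - 2*Real.sqrt 2)..(3 + 2*Real.sqrt 2),
        ((1 - 2*α₂ + α₂*x) * x^3) * Real.sqrt (8 - (x-3)^2))
      = ∫ x in (3 - 2*Real.sqrt 2)..(3 + 2*Real.sqrt 2),
        ((27*(1-2*α₂)+81*α₂) + (27*(1-2*α₂)+108*α₂)*(x-3) + (9*(1-2*α₂)+54*α₂)*(x-3)^2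
          + ((1-2*α₂)+12*α₂)*(x-3)^3 + α₂*(x-3)^4) * Real.sqrt (8 - (x-3)^2)
      from intervalIntegral.integral_congr fun x _ => by ring,
      semicircle_int_u]
    field_simp
    ring
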